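/- Let T ∈ ℍₙ have eigenvalues λ₁,...,λₙ (with multiplicity). Then the C*-convex hull of {T} equals {Σᵢ₌₁ⁿ λᵢEᵢ : Eᵢ ≥ 0, Σᵢ₌₁ⁿ Eᵢ = I}. -/

import Mathlib

noncomputable section
open scoped ComplexOrder

section Aux

variable {n : ℕ}

open Matrix

private lemma aux_mul_vecMulVec (M : Matrix (Fin n) (Fin n) ℂ) (a b : Fin n → ℂ) :
    M * vecMulVec a b = vecMulVec (M *ᵥ a) b := by
  ext i j
  simp [Matrix.mul_apply, vecMulVec_apply, mulVec, dotProduct, Finset.sum_mul, mul_assoc]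

private lemma aux_vecMulVec_mul (M : Matrix (Fin n) (Fin n) ℂ) (a b : Fin n → ℂ) :
    vecMulVec a b * M = vecMulVec a (b ᵥ* M) := by
  ext i j
  simp [Matrix.mul_apply, vecMulVec_apply, vecMul, dotProduct, Finset.mul_sum, mul_assoc]

private lemma aux_vecMulVec_mul_vecMulVec (a b c d : Fin n → ℂ) :
    vecMulVec a b * vecMulVec c d = (b ⬝ᵥ c) • vecMulVec a d := by
  ext i j
  simp only [Matrix.mul_apply, vecMulVec_apply, Matrix.smul_apply, dotProduct,
    Finset.sum_mul, smul_eq_mul]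
  refine Finset.sum_congr rfl fun k _ => ?_
  ring

private lemma aux_star_vecMulVec (a b : Fin n → ℂ) :
    star (vecMulVec a b) = vecMulVec (star b) (star a) := by
  ext i j
  simp [vecMulVec_apply, Matrix.conjTranspose_apply, mul_comm]

private lemma aux_posSemidef_vecMulVec (v : Fin n → ℂ) :
    (vecMulVec v (star v)).PosSemidef := by
  refine Matrix.PosSemidef.of_dotProduct_mulVec_nonneg ?_ ?_
  · ext i j
    simp [vecMulVec_apply, Matrix.conjTranspose_apply, mul_comm]
  · intro x
    have h : (vecMulVec v (star v)) *ᵥ x = (star v ⬝ᵥ x) • v := by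
      ext i
      simp only [vecMulVec_apply, mulVec, dotProduct, Pi.smul_apply, Pi.star_apply,
        smul_eq_mul, Finset.sum_mul]
      refine Finset.sum_congr rfl fun k _ => ?_
      ring
    rw [h]
    have h2 : star x ⬝ᵥ ((star v ⬝ᵥ x) • v) = (star v ⬝ᵥ x) * (star x ⬝ᵥ v) := by
      rw [dotProduct_smul]; simp [mul_comm]
    rw [h2]
    have hsc : star x ⬝ᵥ v = star (star v ⬝ᵥ x) := by
      simp only [dotProduct, star_sum, star_mul', star_star, Pi.star_apply]
      exact Finset.sum_congr rfl fun k _ => (mul_comm _ _)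
    rw [hsc]
    exact mul_star_self_nonneg (star v ⬝ᵥ x)

/-- Key decomposition: for any diagonal entries `d`,
`U * diagonal d * Uᴴ = ∑ j, d j • (col j of U)(col j of U)ᴴ`. -/
private lemma aux_decomp (U : Matrix (Fin n) (Fin n) ℂ) (d : Fin n → ℂ) :
    U * diagonal d * star U =
      ∑ j, d j • vecMulVec (fun a => U a j) (fun b => star (U b j)) := by
  ext a b
  simp only [Matrix.sum_apply, Matrix.smul_apply, vecMulVec_apply, Matrix.mul_apply,
    Matrix.diagonal_apply, star_eq_conjTranspose, Matrix.conjTranspose_apply, smul_eq_mul]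
  refine Finset.sum_congr rfl fun j _ => ?_
  rw [Finset.sum_mul]
  rw [Finset.sum_eq_single j]
  · simp; ring
  · intro k _ hk; simp [hk]
  · simp

end Aux

open Matrix

/-- The C*-convex hull of a Hermitian matrix T is the set of all
Σᵢ λᵢ Eᵢ with Eᵢ ≥ 0 and Σᵢ Eᵢ = I, where λᵢ are the eigenvalues of T. -/
theorem cstarConvexHull_eq_eigenvalue_combinations {n : ℕ}
    (T : Matrix (Fin n) (Fin n) ℂ) (hT : T.IsHermitian) :
    {X : Matrix (Fin n) (Fin n) ℂ | ∃ (m : ℕ) (C : Fin m → Matrix (Fin n) (Fin n) ℂ),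
        ∑ i, star (C i) * C i = 1 ∧ X = ∑ i, star (C i) * T * C i} =
    {X : Matrix (Fin n) (Fin n) ℂ | ∃ E : Fin n → Matrix (Fin n) (Fin n) ℂ,
        (∀ i, (E i).PosSemidef) ∧ ∑ i, E i = 1 ∧
        X = ∑ i, (hT.eigenvalues i : ℂ) • E i} := by
  classical
  set U : Matrix (Fin n) (Fin n) ℂ := (hT.eigenvectorUnitary : Matrix (Fin n) (Fin n) ℂ) with hU
  set u : Fin n → Fin n → ℂ := fun j a => U a j with hu
  set P : Fin n → Matrix (Fin n) (Fin n) ℂ :=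
    fun j => Matrix.vecMulVec (fun a => U a j) (fun b => star (U b j)) with hP
  have hPeq : ∀ j, P j = Matrix.vecMulVec (u j) (star (u j)) := fun j => rfl
  have hUU : U * star U = 1 :=
    (Matrix.mem_unitaryGroup_iff).mp (hT.eigenvectorUnitary).2
  have hUU' : star U * U = 1 :=
    (Matrix.mem_unitaryGroup_iff').mp (hT.eigenvectorUnitary).2
  have h1 : ∀ d : Fin n → ℂ, U * Matrix.diagonal d * star U = ∑ j, d j • P j :=
    fun d => aux_decomp U d
  have hPsum : ∑ j, P j = 1 := by
    have h := h1 (fun _ => (1 : ℂ))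
    rw [show Matrix.diagonal (fun _ => (1 : ℂ)) = 1 from Matrix.diagonal_one,
      mul_one, hUU] at h
    simp only [one_smul] at h
    exact h.symm
  have hTP : T = ∑ j, (hT.eigenvalues j : ℂ) • P j := by
    have hspec := hT.spectral_theorem
    rw [Unitary.conjStarAlgAut_apply] at hspec
    rw [← hU] at hspec
    have h := h1 (RCLike.ofReal ∘ hT.eigenvalues)
    rw [← hspec] at h
    exact h
  have hueq : ∀ j, u j = ⇑(hT.eigenvectorBasis j) := by
    intro j; ext a
    exact hT.eigenvectorUnitary_apply a j
  have hnorm : ∀ j, star (u j) ⬝ᵥ u j = 1 := by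
    intro j
    have h := congrFun (congrFun hUU' j) j
    simpa [Matrix.mul_apply, Matrix.one_apply, Matrix.conjTranspose_apply,
      dotProduct, Matrix.star_eq_conjTranspose, hu] using h
  ext X
  simp only [Set.mem_setOf_eq]
  constructor
  · rintro ⟨m, C, hC1, rfl⟩
    refine ⟨fun j => ∑ i, star (C i) * P j * C i, ?_, ?_, ?_⟩
    · intro j
      refine Finset.sum_induction _ _ (fun A B hA hB => hA.add hB)
        Matrix.PosSemidef.zero ?_
      intro i _
      have key : star (C i) * P j * C i =
          Matrix.vecMulVec (star (C i) *ᵥ u j) (star (star (C i) *ᵥ u j)) := by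
        rw [hPeq]
        rw [mul_assoc, aux_vecMulVec_mul, aux_mul_vecMulVec]
        rw [Matrix.star_mulVec, Matrix.star_eq_conjTranspose,
          Matrix.conjTranspose_conjTranspose]
      rw [key]
      exact aux_posSemidef_vecMulVec _
    · rw [Finset.sum_comm]
      calc ∑ i, ∑ j, star (C i) * P j * C i
          = ∑ i, star (C i) * (∑ j, P j) * C i := by
            refine Finset.sum_congr rfl fun i _ => ?_
            rw [Finset.mul_sum, Finset.sum_mul]
        _ = 1 := by rw [hPsum]; simp only [mul_one]; exact hC1
    · calc ∑ i, star (C i) * T * C i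
          = ∑ i, ∑ j, (hT.eigenvalues j : ℂ) • (star (C i) * P j * C i) := by
            refine Finset.sum_congr rfl fun i _ => ?_
            conv_lhs => rw [hTP]
            rw [Finset.mul_sum, Finset.sum_mul]
            refine Finset.sum_congr rfl fun j _ => ?_
            rw [Matrix.mul_smul, Matrix.smul_mul]
        _ = ∑ j, (hT.eigenvalues j : ℂ) • ∑ i, star (C i) * P j * C i := by
            rw [Finset.sum_comm]
            exact Finset.sum_congr rfl fun j _ => (Finset.smul_sum).symm
  · rintro ⟨E, hEpos, hEsum, rfl⟩
    choose B hB using fun j => (by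
      letI : PartialOrder (Matrix (Fin n) (Fin n) ℂ) := Matrix.instPartialOrder
      haveI := Matrix.instIsOrderedAddMonoid (𝕜 := ℂ) (n := Fin n)
      haveI := Matrix.instNonnegSpectrumClass (𝕜 := ℂ) (n := Fin n)
      haveI := Matrix.instStarOrderedRing (𝕜 := ℂ) (n := Fin n)
      obtain ⟨B, hB1, -, hB⟩ := CFC.exists_sqrt_of_isSelfAdjoint_of_quasispectrumRestricts
        (hEpos j).isHermitian (QuasispectrumRestricts.nnreal_of_nonneg (hEpos j).nonneg)
      exact ⟨B, by rw [← star_eq_conjTranspose, hB1.star_eq]; exact hB.symm⟩ : ∃ B : Matrix (Fin n) (Fin n) ℂ, E j = Bᴴ * B)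
    set F : Fin n × Fin n → Matrix (Fin n) (Fin n) ℂ :=
      fun p => Matrix.vecMulVec (u p.1) (B p.1 p.2) with hF
    refine ⟨n * n, fun i => F (finProdFinEquiv.symm i), ?_, ?_⟩
    · rw [Equiv.sum_comp finProdFinEquiv.symm (fun p => star (F p) * F p)]
      rw [Fintype.sum_prod_type]
      have hterm : ∀ j k, star (F (j, k)) * F (j, k) =
          Matrix.vecMulVec (star (B j k)) (B j k) := by
        intro j k
        rw [hF]
        simp only
        rw [aux_star_vecMulVec, aux_vecMulVec_mul_vecMulVec, hnorm j, one_smul]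
      calc ∑ j, ∑ k, star (F (j, k)) * F (j, k)
          = ∑ j, E j := by
            refine Finset.sum_congr rfl fun j _ => ?_
            rw [hB j]
            ext a b
            simp only [hterm, Matrix.sum_apply, Matrix.vecMulVec_apply, Matrix.mul_apply,
              Matrix.conjTranspose_apply, Pi.star_apply]
        _ = 1 := hEsum
    · rw [Equiv.sum_comp finProdFinEquiv.symm (fun p => star (F p) * T * F p)]
      rw [Fintype.sum_prod_type]
      symm
      have hTu : ∀ j, T *ᵥ u j = (hT.eigenvalues j : ℂ) • u j := by
        intro j
        rw [hueq j, hT.mulVec_eigenvectorBasis]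
        ext a
        simp [Complex.real_smul]
      have hterm : ∀ j k, star (F (j, k)) * T * F (j, k) =
          (hT.eigenvalues j : ℂ) • Matrix.vecMulVec (star (B j k)) (B j k) := by
        intro j k
        rw [hF]
        simp only
        rw [aux_star_vecMulVec, mul_assoc, aux_mul_vecMulVec, hTu j]
        have : Matrix.vecMulVec ((hT.eigenvalues j : ℂ) • u j) (B j k) =
            (hT.eigenvalues j : ℂ) • Matrix.vecMulVec (u j) (B j k) := by
          ext a b; simp [Matrix.vecMulVec_apply, mul_assoc]
        rw [this, Matrix.mul_smul, aux_vecMulVec_mul_vecMulVec, hnorm j, one_smul]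
      calc ∑ j, ∑ k, star (F (j, k)) * T * F (j, k)
          = ∑ j, (hT.eigenvalues j : ℂ) • E j := by
            refine Finset.sum_congr rfl fun j _ => ?_
            simp only [hterm, ← Finset.smul_sum]
            congr 1
            rw [hB j]
            ext a b
            simp only [Matrix.sum_apply, Matrix.vecMulVec_apply, Matrix.mul_apply,
              Matrix.conjTranspose_apply, Pi.star_apply]

end
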